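/- Every finite semisimple ring R admits a symmetric generating character: there exists an additive character χ of R such that χ(a*b) = χ(b*a) for all a, b ∈ R, and every additive character of R equals x ↦ χ(x*r) for some r ∈ R. -/

import Mathlib

open Function

section AddCharPart
variable {G : Type*} [AddCommGroup G]

noncomputable def AddChar.toUnitsAddChar (ψ : AddChar G ℂ) : AddChar G ℂˣ where
  toFun a := ⟨ψ a, ψ (-a),
    by rw [← AddChar.map_add_eq_mul, add_neg_cancel, AddChar.map_zero_eq_one],
    by rw [← AddChar.map_add_eq_mul, neg_add_cancel, AddChar.map_zero_eq_one]⟩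
  map_zero_eq_one' := Units.ext (by simpa using AddChar.map_zero_eq_one ψ)
  map_add_eq_mul' a b := Units.ext (by simpa using AddChar.map_add_eq_mul ψ a b)

@[simp] lemma AddChar.toUnitsAddChar_val (ψ : AddChar G ℂ) (a : G) :
    ((ψ.toUnitsAddChar a : ℂˣ) : ℂ) = ψ a := rfl

noncomputable def AddChar.unitsEquivComplex : AddChar G ℂˣ ≃ AddChar G ℂ where
  toFun χ := (Units.coeHom ℂ).compAddChar χ
  invFun := AddChar.toUnitsAddChar
  left_inv χ := DFunLike.ext _ _ fun a => Units.ext rfl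
  right_inv ψ := DFunLike.ext _ _ fun a => rfl

lemma AddChar.natCard_units_eq [Finite G] : Nat.card (AddChar G ℂˣ) = Nat.card G := by
  haveI := Fintype.ofFinite G
  rw [Nat.card_congr (AddChar.unitsEquivComplex (G := G)), Nat.card_eq_fintype_card,
    Nat.card_eq_fintype_card, AddChar.card_eq]

lemma exists_nontrivial_addChar (G : Type*) [AddCommGroup G] [Finite G] [Nontrivial G] :
    ∃ (ψ : AddChar G ℂˣ) (x : G), ψ x ≠ 1 := by
  obtain ⟨a, ha⟩ := exists_ne (0 : G)
  obtain ⟨ψ, hψ⟩ := AddChar.exists_apply_ne_zero.2 ha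
  exact ⟨ψ.toUnitsAddChar, a, fun h => hψ (by simpa using congrArg Units.val h)⟩

lemma generating_of_nondeg {E : Type*} [Ring E] [Finite E] (χ : AddChar E ℂˣ)
    (h : ∀ g : E, g ≠ 0 → ∃ f : E, χ (f * g) ≠ 1) :
    ∀ ψ : AddChar E ℂˣ, ∃ r : E, ∀ x : E, ψ x = χ (x * r) := by
  haveI : Finite (AddChar E ℂˣ) := Finite.of_equiv _ AddChar.unitsEquivComplex.symm
  let Φ : E → AddChar E ℂˣ := fun g =>
    { toFun := fun x => χ (x * g)
      map_zero_eq_one' := by show χ (0 * g) = 1; rw [zero_mul, AddChar.map_zero_eq_one]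
      map_add_eq_mul' := fun a b => by
        show χ ((a + b) * g) = χ (a * g) * χ (b * g)
        rw [add_mul, AddChar.map_add_eq_mul] }
  have hΦ : ∀ g x, Φ g x = χ (x * g) := fun _ _ => rfl
  have hinj : Injective Φ := by
    intro g g' hgg
    by_contra hne
    obtain ⟨f, hf⟩ := h (g - g') (sub_ne_zero.2 hne)
    apply hf
    have h1 : χ (f * g) = χ (f * g') := by rw [← hΦ, ← hΦ, hgg]
    have h2 : f * g = f * (g - g') + f * g' := by rw [mul_sub, sub_add_cancel]
    rw [h2, AddChar.map_add_eq_mul] at h1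
    exact mul_right_cancel (h1.trans (one_mul _).symm)
  have hbij : Bijective Φ := (Nat.bijective_iff_injective_and_card Φ).2
    ⟨hinj, (AddChar.natCard_units_eq (G := E)).symm⟩
  intro ψ
  obtain ⟨r, hr⟩ := hbij.2 ψ
  exact ⟨r, fun x => by rw [← hr, hΦ]⟩

lemma transfer_antiIso {S T : Type*} [Ring S] [Ring T] (t : S ≃+ T)
    (hmul : ∀ a b : S, t (a * b) = t b * t a)
    (H : ∃ χ : AddChar T ℂˣ, (∀ a b : T, χ (a * b) = χ (b * a)) ∧
      ∀ ψ : AddChar T ℂˣ, ∃ r : T, ∀ x : T, ψ x = χ (x * r)) :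
    ∃ χ : AddChar S ℂˣ, (∀ a b : S, χ (a * b) = χ (b * a)) ∧
      ∀ ψ : AddChar S ℂˣ, ∃ r : S, ∀ x : S, ψ x = χ (x * r) := by
  obtain ⟨χ, hsym, hgen⟩ := H
  refine ⟨χ.compAddMonoidHom t.toAddMonoidHom, fun a b => ?_, fun ψ => ?_⟩
  · show χ (t (a * b)) = χ (t (b * a))
    rw [hmul, hmul, hsym]
  · obtain ⟨ρ, hρ⟩ := hgen (ψ.compAddMonoidHom t.symm.toAddMonoidHom)
    refine ⟨t.symm ρ, fun x => ?_⟩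
    show ψ x = χ (t (x * t.symm ρ))
    rw [hmul, AddEquiv.apply_symm_apply, hsym]
    have h1 := hρ (t x)
    have h2 : (ψ.compAddMonoidHom t.symm.toAddMonoidHom) (t x) = ψ x := by
      show ψ (t.symm (t x)) = ψ x
      rw [AddEquiv.symm_apply_apply]
    rw [h2] at h1
    exact h1

end AddCharPart


section Construction

attribute [local instance] Classical.propDecidable

variable {R M : Type*} [Ring R] [AddCommGroup M] [Module R M] {ι : Type*}

/-- The "isomorphic submodules" setoid on the index type. -/
def simRel (L : ι → Submodule R M) : Setoid ι where
  r i j := Nonempty (L i ≃ₗ[R] L j)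
  iseqv := ⟨fun _ => ⟨LinearEquiv.refl R _⟩, fun h => ⟨h.some.symm⟩,
    fun h h' => ⟨h.some.trans h'.some⟩⟩

variable (L : ι → Submodule R M)

noncomputable def wIso (c : Quotient (simRel L)) (i : ι)
    (h : Quotient.mk (simRel L) i = c) : L (Quotient.out c) ≃ₗ[R] L i :=
  (Quotient.exact ((Quotient.out_eq c).trans h.symm) : Nonempty _).some

variable (π : ∀ i, M →ₗ[R] L i)

noncomputable def ent (f : Module.End R M) {c : Quotient (simRel L)}
    (i k : {x : ι // Quotient.mk (simRel L) x = c}) :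
    Module.End R (L (Quotient.out c)) :=
  (wIso L c i.1 i.2).symm.toLinearMap ∘ₗ π i.1 ∘ₗ f ∘ₗ (L k.1).subtype ∘ₗ
    (wIso L c k.1 k.2).toLinearMap

lemma ent_apply (f : Module.End R M) {c : Quotient (simRel L)}
    (i k : {x : ι // Quotient.mk (simRel L) x = c}) (x : L (Quotient.out c)) :
    ent L π f i k x
      = (wIso L c i.1 i.2).symm (π i.1 (f ((wIso L c k.1 k.2 x : L k.1) : M))) := rfl

variable [Fintype ι]

noncomputable def blockTr (c : Quotient (simRel L)) :
    Module.End R M →+ Module.End R (L (Quotient.out c)) where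
  toFun f := ∑ i : {x : ι // Quotient.mk (simRel L) x = c}, ent L π f i i
  map_zero' := Finset.sum_eq_zero fun i _ => LinearMap.ext fun x => by
    simp [ent_apply]
  map_add' f g := by
    rw [← Finset.sum_add_distrib]
    exact Finset.sum_congr rfl fun i _ => LinearMap.ext fun x => by
      simp [ent_apply]

lemma schur_vanish (hsimple : ∀ i, IsSimpleModule R (L i)) {i j : ι}
    (hij : Quotient.mk (simRel L) i ≠ Quotient.mk (simRel L) j)
    (f : Module.End R M) (y : L j) : π i (f (y : M)) = 0 := by
  haveI := hsimple
  by_contra hy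
  have hφ : (π i ∘ₗ f ∘ₗ (L j).subtype) ≠ 0 := fun h0 => hy (by
    simpa using DFunLike.congr_fun h0 y)
  exact hij (Quotient.sound
    ⟨(LinearEquiv.ofBijective _ (LinearMap.bijective_of_ne_zero hφ)).symm⟩)

lemma blockTr_mul (hsimple : ∀ i, IsSimpleModule R (L i))
    (hsum : ∀ m : M, ∑ i, ((π i m : L i) : M) = m)
    (c : Quotient (simRel L)) (f g : Module.End R M) :
    blockTr L π c (f * g)
      = ∑ k : {x : ι // Quotient.mk (simRel L) x = c},
          ∑ i : {x : ι // Quotient.mk (simRel L) x = c},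
            ent L π f i k * ent L π g k i := by
  have hone : (1 : Module.End R M) = ∑ j : ι, (L j).subtype ∘ₗ π j := by
    apply LinearMap.ext; intro m
    simpa using (hsum m).symm
  have hsplit : f * g = ∑ j : ι, f * ((L j).subtype ∘ₗ π j) * g := by
    conv_lhs => rw [show f * g = f * 1 * g by rw [mul_one], hone]
    rw [Finset.mul_sum, Finset.sum_mul]
  rw [hsplit, map_sum]
  have hterm0 : ∀ j : ι, Quotient.mk (simRel L) j ≠ c →
      blockTr L π c (f * ((L j).subtype ∘ₗ π j) * g) = 0 := by
    intro j hj
    refine Finset.sum_eq_zero fun i _ => LinearMap.ext fun x => ?_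
    rw [ent_apply]
    have hne : Quotient.mk (simRel L) i.1 ≠ Quotient.mk (simRel L) j := by
      rw [i.2]; exact fun h => hj h.symm
    have h1 := schur_vanish L π hsimple hne f
      (π j (g ((wIso L c i.1 i.2 x : L i.1) : M)))
    show (wIso L c i.1 i.2).symm
      (π i.1 ((f * ((L j).subtype ∘ₗ π j) * g) ((wIso L c i.1 i.2 x : L i.1) : M))) = 0
    rw [show ((f * ((L j).subtype ∘ₗ π j) * g) ((wIso L c i.1 i.2 x : L i.1) : M))
        = f ((π j (g ((wIso L c i.1 i.2 x : L i.1) : M)) : L j) : M) from rfl, h1]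
    simp
  have hterm1 : ∀ (j : ι) (hj : Quotient.mk (simRel L) j = c),
      blockTr L π c (f * ((L j).subtype ∘ₗ π j) * g)
        = ∑ i : {x : ι // Quotient.mk (simRel L) x = c},
            ent L π f i ⟨j, hj⟩ * ent L π g ⟨j, hj⟩ i := by
    intro j hj
    refine Finset.sum_congr rfl fun i _ => LinearMap.ext fun x => ?_
    simp only [ent_apply, Module.End.mul_apply, LinearMap.comp_apply, Submodule.subtype_apply,
      LinearEquiv.apply_symm_apply]
  calc ∑ j : ι, blockTr L π c (f * ((L j).subtype ∘ₗ π j) * g)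
      = ∑ j ∈ Finset.univ.filter (fun j => Quotient.mk (simRel L) j = c),
          blockTr L π c (f * ((L j).subtype ∘ₗ π j) * g) :=
        (Finset.sum_subset (Finset.filter_subset _ _)
          (fun j _ hj => hterm0 j (by simpa using hj))).symm
    _ = ∑ k : {x : ι // Quotient.mk (simRel L) x = c},
          blockTr L π c (f * ((L k.1).subtype ∘ₗ π k.1) * g) :=
        Finset.sum_subtype _ (by simp) _
    _ = _ := Finset.sum_congr rfl fun k _ => hterm1 k.1 k.2


variable [Finite M]

lemma exists_symm_nondeg (hsimple : ∀ i, IsSimpleModule R (L i))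
    (hid : ∀ (j : ι) (x : L j), π j (x : M) = x)
    (hzero : ∀ ⦃i j : ι⦄, i ≠ j → ∀ x : L j, π i (x : M) = 0)
    (hsum : ∀ m : M, ∑ i, ((π i m : L i) : M) = m) :
    ∃ χ : AddChar (Module.End R M) ℂˣ,
      (∀ f g : Module.End R M, χ (f * g) = χ (g * f)) ∧
      (∀ g : Module.End R M, g ≠ 0 → ∃ f : Module.End R M, χ (f * g) ≠ 1) := by
  haveI := hsimple
  haveI : ∀ c : Quotient (simRel L), Finite (Module.End R (L (Quotient.out c))) :=
    fun c => FunLike.finite _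
  have hnt : ∀ c : Quotient (simRel L),
      ∃ (ψ : AddChar (Module.End R (L (Quotient.out c))) ℂˣ)
        (x : Module.End R (L (Quotient.out c))), ψ x ≠ 1 :=
    fun c => exists_nontrivial_addChar _
  choose ψ x₀ hx₀ using hnt
  refine ⟨{ toFun := fun f => ∏ c, ψ c (blockTr L π c f),
            map_zero_eq_one' := ?_, map_add_eq_mul' := ?_ }, fun f g => ?_, fun g hg => ?_⟩
  · show ∏ c, ψ c (blockTr L π c 0) = 1
    refine Finset.prod_eq_one fun c _ => ?_
    rw [map_zero, AddChar.map_zero_eq_one]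
  · intro f g
    show ∏ c, ψ c (blockTr L π c (f + g))
      = (∏ c, ψ c (blockTr L π c f)) * ∏ c, ψ c (blockTr L π c g)
    rw [← Finset.prod_mul_distrib]
    refine Finset.prod_congr rfl fun c _ => ?_
    rw [map_add, AddChar.map_add_eq_mul]
  · show ∏ c, ψ c (blockTr L π c (f * g)) = ∏ c, ψ c (blockTr L π c (g * f))
    refine Finset.prod_congr rfl fun c _ => ?_
    rw [blockTr_mul L π hsimple hsum c f g, blockTr_mul L π hsimple hsum c g f,
      Finset.sum_comm]
    exact congrArg _ (Finset.sum_congr rfl fun i _ =>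
      Finset.sum_congr rfl fun k _ => mul_comm _ _)
  · -- nondegeneracy
    have h1 : ∃ (j : ι) (y : L j), g ((y : M)) ≠ 0 := by
      by_contra hcon; push_neg at hcon
      apply hg
      apply LinearMap.ext; intro m
      have hm := hsum m
      calc g m = g (∑ i, ((π i m : L i) : M)) := by rw [hm]
        _ = ∑ i, g ((π i m : L i) : M) := map_sum g _ _
        _ = (0 : Module.End R M) m := by simp [hcon]
    obtain ⟨j, y0, hy0⟩ := h1
    have h2 : ∃ i : ι, π i (g (y0 : M)) ≠ 0 := by
      by_contra hcon; push_neg at hcon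
      apply hy0
      rw [← hsum (g (y0 : M))]
      refine Finset.sum_eq_zero fun i _ => ?_
      rw [hcon i]; rfl
    obtain ⟨i, hy1⟩ := h2
    set c := Quotient.mk (simRel L) j with hcdef
    have hic : Quotient.mk (simRel L) i = c := by
      by_contra hne
      exact hy1 (schur_vanish L π hsimple hne g y0)
    set β := ent L π g (⟨i, hic⟩ : {x : ι // Quotient.mk (simRel L) x = c}) ⟨j, hcdef.symm⟩
      with hβdef
    have hβ : β ≠ 0 := by
      intro h0
      apply hy1
      have h3 : π i (g (y0 : M))
          = (wIso L c i hic) (β ((wIso L c j hcdef.symm).symm y0)) := by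
        rw [hβdef, ent_apply, LinearEquiv.apply_symm_apply, LinearEquiv.apply_symm_apply]
      rw [h3, h0]; simp
    set d := x₀ c * β⁻¹ with hddef
    set F : Module.End R M := (L j).subtype ∘ₗ (wIso L c j hcdef.symm).toLinearMap ∘ₗ d ∘ₗ
      (wIso L c i hic).symm.toLinearMap ∘ₗ π i with hFdef
    refine ⟨F, ?_⟩
    have hFg : ∀ (m : M), (F * g) m
        = (((wIso L c j hcdef.symm) (d ((wIso L c i hic).symm (π i (g m)))) : L j) : M) :=
      fun m => rfl
    have hτ0 : ∀ c', c' ≠ c → blockTr L π c' (F * g) = 0 := by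
      intro c' hc'
      refine Finset.sum_eq_zero fun m _ => LinearMap.ext fun x => ?_
      rw [ent_apply, hFg]
      have hmj : m.1 ≠ j := fun h => hc' (by rw [← m.2, h, ← hcdef])
      rw [hzero hmj]
      simp
    have hτc : blockTr L π c (F * g) = x₀ c := by
      have hsingle : blockTr L π c (F * g)
          = ent L π (F * g) (⟨j, hcdef.symm⟩ : {x : ι // Quotient.mk (simRel L) x = c})
              ⟨j, hcdef.symm⟩ := by
        refine Finset.sum_eq_single _ (fun m _ hm => LinearMap.ext fun x => ?_)
          (fun h => absurd (Finset.mem_univ _) h)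
        rw [ent_apply, hFg]
        have hmj : m.1 ≠ j := fun h => hm (Subtype.ext h)
        rw [hzero hmj]
        simp
      rw [hsingle]
      have h4 : ent L π (F * g) (⟨j, hcdef.symm⟩ : {x : ι // Quotient.mk (simRel L) x = c})
          ⟨j, hcdef.symm⟩ = d * β := by
        apply LinearMap.ext; intro x
        rw [ent_apply, hFg, hid j, LinearEquiv.symm_apply_apply]
        rfl
      rw [h4, hddef, mul_assoc, inv_mul_cancel₀ hβ, mul_one]
    show ∏ c', ψ c' (blockTr L π c' (F * g)) ≠ 1
    rw [Finset.prod_eq_single_of_mem c (Finset.mem_univ c)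
      (fun c' _ hne => by rw [hτ0 c' hne, AddChar.map_zero_eq_one]), hτc]
    exact hx₀ c

end Construction

theorem finite_semisimple_ring_has_symmetric_generating_character
    (R : Type*) [Ring R] [Finite R] [IsSemisimpleRing R] :
    ∃ χ : AddChar R ℂˣ,
      (∀ a b : R, χ (a * b) = χ (b * a)) ∧
      (∀ ψ : AddChar R ℂˣ, ∃ r : R, ∀ x : R, ψ x = χ (x * r)) := by
  classical
  obtain ⟨s, hind, htop, hsimp⟩ :=
    IsSemisimpleModule.exists_sSupIndep_sSup_simples_eq_top R R
  haveI : Finite (Submodule R R) :=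
    Finite.of_injective (fun p : Submodule R R => (p : Set R)) SetLike.coe_injective
  letI : Fintype s := Fintype.ofFinite s
  let L : s → Submodule R R := fun i => i.1
  have hsimple : ∀ i : s, IsSimpleModule R (L i) := fun i => hsimp i.1 i.2
  have hLind : iSupIndep L := (sSupIndep_iff s).mp hind
  have hLtop : iSup L = ⊤ := by rw [← sSup_eq_iSup']; exact htop
  have hint := DirectSum.isInternal_submodule_of_iSupIndep_of_iSup_eq_top hLind hLtop
  let e := LinearEquiv.ofBijective (DirectSum.coeLinearMap L) hint
  let π : ∀ i : s, R →ₗ[R] L i := fun i =>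
    (DirectSum.component R s (fun i => L i) i) ∘ₗ e.symm.toLinearMap
  have hπ : ∀ (i : s) (m : R), π i m = e.symm m i := fun i m => rfl
  have hid : ∀ (i : s) (x : L i), π i (x : R) = x := by
    intro i x
    rw [hπ]
    exact hint.ofBijective_coeLinearMap_same x
  have hzero : ∀ ⦃i j : s⦄, i ≠ j → ∀ x : L j, π i (x : R) = 0 := by
    intro i j hij x
    rw [hπ]
    exact hint.ofBijective_coeLinearMap_of_ne (Ne.symm hij) x
  have hsum : ∀ m : R, ∑ i, ((π i m : L i) : R) = m := by
    intro m
    have h1 : ∀ i : s, ((π i m : L i) : R)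
        = DirectSum.coeLinearMap L (DirectSum.lof R s (fun i => L i) i (e.symm m i)) := by
      intro i
      rw [hπ, DirectSum.lof_eq_of, DirectSum.coeLinearMap_of]
    calc ∑ i, ((π i m : L i) : R)
        = ∑ i, DirectSum.coeLinearMap L (DirectSum.lof R s (fun i => L i) i (e.symm m i)) :=
          Finset.sum_congr rfl fun i _ => h1 i
      _ = DirectSum.coeLinearMap L (∑ i, DirectSum.lof R s (fun i => L i) i (e.symm m i)) :=
          (map_sum _ _ _).symm
      _ = DirectSum.coeLinearMap L (e.symm m) := by
          rw [show (∑ i, DirectSum.lof R s (fun i => L i) i (e.symm m i)) = e.symm m by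
            simpa [DirectSum.lof_eq_of] using DirectSum.sum_univ_of (e.symm m)]
      _ = m := e.apply_symm_apply m
  obtain ⟨χE, hsymE, hndE⟩ := exists_symm_nondeg L π hsimple hid hzero hsum
  haveI : Finite (Module.End R R) := FunLike.finite _
  have hgenE := generating_of_nondeg χE hndE
  let t : R ≃+ Module.End R R :=
    { toFun := fun r =>
        { toFun := fun x => x * r
          map_add' := fun x y => add_mul x y r
          map_smul' := fun c x => by simp [smul_eq_mul, mul_assoc] }
      invFun := fun φ => φ 1
      left_inv := fun r => one_mul r
      right_inv := fun φ => LinearMap.ext fun x => by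
        show x * φ 1 = φ x
        calc x * φ 1 = x • φ 1 := (smul_eq_mul x (φ 1)).symm
          _ = φ (x • (1 : R)) := (map_smul φ x 1).symm
          _ = φ x := by rw [smul_eq_mul, mul_one]
      map_add' := fun r r' => LinearMap.ext fun x => mul_add x r r' }
  refine transfer_antiIso t (fun a b => LinearMap.ext fun x => ?_) ⟨χE, hsymE, hgenE⟩
  show x * (a * b) = (x * a) * b
  rw [mul_assoc]
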